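/- Let $f_1,\ldots,f_n:[d,b)\to(0,\infty)$ be continuous positive functions, fix $i$, and let $\hat c^k=(c_1^k,\ldots,c_n^k)$ be a sequence in the closed simplex $\overline{\Delta}_n=\{\hat c\in[0,1]^n:\sum_j c_j=1\}$ converging to $\hat c^\infty\in\overline{\Delta}_n$. Then $\lim_{k\to\infty}\int_d^b f_i^{-2}\left(\sum_{j=1}^n c_j^k f_j^{-2}\right)^{-1/2}=\int_d^b f_i^{-2}\left(\sum_{j=1}^n c_j^\infty f_j^{-2}\right)^{-1/2}$, where both sides take values in $(0,\infty]$. -/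
import Mathlib


open MeasureTheory Set Filter

theorem stmt_5 (n : ℕ) (d b : ℝ) (hdb : d < b) (f : Fin n → ℝ → ℝ)
    (hcont : ∀ j, ContinuousOn (f j) (Ico d b))
    (hpos : ∀ j, ∀ τ ∈ Ico d b, 0 < f j τ)
    (i : Fin n)
    (ck : ℕ → Fin n → ℝ) (cinf : Fin n → ℝ)
    (hck : ∀ k, (∀ j, ck k j ∈ Icc (0:ℝ) 1) ∧ (∑ j, ck k j = 1))
    (hcinf : (∀ j, cinf j ∈ Icc (0:ℝ) 1) ∧ (∑ j, cinf j = 1))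
    (hconv : Tendsto ck atTop (nhds cinf)) :
    Tendsto (fun k => ∫⁻ τ in Ico d b,
        ENNReal.ofReal ((f i τ ^ 2)⁻¹ *
          (Real.sqrt (∑ j, ck k j * (f j τ ^ 2)⁻¹))⁻¹)) atTop
      (nhds (∫⁻ τ in Ico d b,
        ENNReal.ofReal ((f i τ ^ 2)⁻¹ *
          (Real.sqrt (∑ j, cinf j * (f j τ ^ 2)⁻¹))⁻¹))) := by
  set s : Set ℝ := Ico d b with hs_def
  have hs : MeasurableSet s := measurableSet_Ico
  set μ := (volume : Measure ℝ).restrict s with hμ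
  -- notation for integrands
  set G : (Fin n → ℝ) → ℝ → ℝ :=
    fun c τ => (f i τ ^ 2)⁻¹ * (Real.sqrt (∑ j, c j * (f j τ ^ 2)⁻¹))⁻¹ with hG
  set F : (Fin n → ℝ) → ℝ → ENNReal := fun c τ => ENNReal.ofReal (G c τ) with hF
  -- ae measurability
  have hfm : ∀ j, AEMeasurable (f j) μ := fun j => (hcont j).aemeasurable hs
  have hmeas : ∀ c : Fin n → ℝ, AEMeasurable (F c) μ := by
    intro c
    apply ENNReal.measurable_ofReal.comp_aemeasurable
    apply AEMeasurable.mul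
    · exact ((hfm i).pow aemeasurable_const).inv
    · apply AEMeasurable.inv
      apply Real.continuous_sqrt.measurable.comp_aemeasurable
      exact Finset.aemeasurable_fun_sum _ fun j _ =>
        aemeasurable_const.mul ((hfm j).pow aemeasurable_const).inv
  -- some positive coordinate of cinf
  obtain ⟨j0, hj0⟩ : ∃ j, 0 < cinf j := by
    by_contra h
    push_neg at h
    have : ∑ j, cinf j = 0 := by
      refine Finset.sum_eq_zero fun j _ => le_antisymm (h j) (hcinf.1 j).1
    rw [hcinf.2] at this; norm_num at this
  -- positivity of the limit sum on s
  have hSpos : ∀ τ ∈ s, 0 < ∑ j, cinf j * (f j τ ^ 2)⁻¹ := by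
    intro τ hτ
    have hterm : ∀ j ∈ Finset.univ, 0 ≤ cinf j * (f j τ ^ 2)⁻¹ := fun j _ =>
      mul_nonneg (hcinf.1 j).1 (inv_nonneg.2 (sq_nonneg _))
    refine Finset.sum_pos' hterm ⟨j0, Finset.mem_univ _, ?_⟩
    exact mul_pos hj0 (inv_pos.2 (pow_pos (hpos j0 τ hτ) 2))
  -- pointwise convergence on s
  have hpt : ∀ τ ∈ s, Tendsto (fun k => F (ck k) τ) atTop (nhds (F cinf τ)) := by
    intro τ hτ
    have hsum : Tendsto (fun k => ∑ j, ck k j * (f j τ ^ 2)⁻¹) atTop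
        (nhds (∑ j, cinf j * (f j τ ^ 2)⁻¹)) := by
      refine tendsto_finset_sum _ fun j _ => ?_
      exact (((continuous_apply j).tendsto cinf).comp hconv).mul_const _
    have hsqrt := (Real.continuous_sqrt.tendsto _).comp hsum
    have hne : Real.sqrt (∑ j, cinf j * (f j τ ^ 2)⁻¹) ≠ 0 :=
      ne_of_gt (Real.sqrt_pos.2 (hSpos τ hτ))
    exact (ENNReal.continuous_ofReal.tendsto _).comp
      ((hsqrt.inv₀ hne).const_mul _)
  -- liminf lower bound via Fatou
  have hliminf : ∫⁻ τ in s, F cinf τ ≤ atTop.liminf fun k => ∫⁻ τ in s, F (ck k) τ := by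
    have heq : ∫⁻ τ in s, F cinf τ = ∫⁻ τ in s, atTop.liminf fun k => F (ck k) τ := by
      refine lintegral_congr_ae ?_
      filter_upwards [ae_restrict_mem hs] with τ hτ
      exact ((hpt τ hτ).liminf_eq).symm
    rw [heq]
    exact lintegral_liminf_le' fun k => hmeas (ck k)
  -- limsup upper bound
  have hlimsup : (atTop.limsup fun k => ∫⁻ τ in s, F (ck k) τ) ≤ ∫⁻ τ in s, F cinf τ := by
    refine ENNReal.le_of_forall_lt_one_mul_le fun a ha => ?_
    rcases eq_or_ne a 0 with rfl | ha0
    · simp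
    have haT : a ≠ ⊤ := ne_top_of_lt (lt_trans ha ENNReal.one_lt_top)
    set lam : ℝ := a.toReal with hlam
    have hlam0 : 0 < lam := ENNReal.toReal_pos ha0 haT
    have hlam1 : lam < 1 := by
      have := (ENNReal.toReal_lt_toReal haT ENNReal.one_ne_top).2 ha
      simpa using this
    have ha_eq : a = ENNReal.ofReal lam := (ENNReal.ofReal_toReal haT).symm
    -- eventually ck k j ≥ lam^2 * cinf j for all j
    have hev : ∀ᶠ k in atTop, ∀ j, lam ^ 2 * cinf j ≤ ck k j := by
      rw [eventually_all]
      intro j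
      rcases eq_or_lt_of_le (hcinf.1 j).1 with h0 | h0
      · exact Eventually.of_forall fun k => by
          rw [← h0, mul_zero]; exact (hck k).1 j |>.1
      · have hlt : lam ^ 2 * cinf j < cinf j := by
          have hsq : lam ^ 2 < 1 := by nlinarith
          nlinarith
        have hcoord : Tendsto (fun k => ck k j) atTop (nhds (cinf j)) :=
          ((continuous_apply j).tendsto cinf).comp hconv
        exact hcoord.eventually (eventually_ge_nhds hlt)
    -- pointwise bound under hev
    have hbound : ∀ᶠ k in atTop,
        (∫⁻ τ in s, F (ck k) τ) ≤ ENNReal.ofReal lam⁻¹ * ∫⁻ τ in s, F cinf τ := by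
      filter_upwards [hev] with k hk
      have hpw : ∀ τ ∈ s, F (ck k) τ ≤ ENNReal.ofReal (lam⁻¹ * G cinf τ) := by
        intro τ hτ
        apply ENNReal.ofReal_le_ofReal
        have hBpos : ∀ j, (0:ℝ) ≤ (f j τ ^ 2)⁻¹ := fun j => inv_nonneg.2 (sq_nonneg _)
        have hsum_ge : lam ^ 2 * (∑ j, cinf j * (f j τ ^ 2)⁻¹) ≤
            ∑ j, ck k j * (f j τ ^ 2)⁻¹ := by
          rw [Finset.mul_sum]
          refine Finset.sum_le_sum fun j _ => ?_
          rw [← mul_assoc]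
          exact mul_le_mul_of_nonneg_right (hk j) (hBpos j)
        have hS := hSpos τ hτ
        have hsqrt_ge : lam * Real.sqrt (∑ j, cinf j * (f j τ ^ 2)⁻¹) ≤
            Real.sqrt (∑ j, ck k j * (f j τ ^ 2)⁻¹) := by
          have : Real.sqrt (lam ^ 2 * (∑ j, cinf j * (f j τ ^ 2)⁻¹)) ≤
              Real.sqrt (∑ j, ck k j * (f j τ ^ 2)⁻¹) := Real.sqrt_le_sqrt hsum_ge
          rwa [Real.sqrt_mul (sq_nonneg lam), Real.sqrt_sq hlam0.le] at this
        have hpos1 : 0 < lam * Real.sqrt (∑ j, cinf j * (f j τ ^ 2)⁻¹) :=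
          mul_pos hlam0 (Real.sqrt_pos.2 hS)
        have hinv : (Real.sqrt (∑ j, ck k j * (f j τ ^ 2)⁻¹))⁻¹ ≤
            lam⁻¹ * (Real.sqrt (∑ j, cinf j * (f j τ ^ 2)⁻¹))⁻¹ := by
          rw [← mul_inv]
          exact inv_anti₀ hpos1 hsqrt_ge
        calc G (ck k) τ ≤ (f i τ ^ 2)⁻¹ *
              (lam⁻¹ * (Real.sqrt (∑ j, cinf j * (f j τ ^ 2)⁻¹))⁻¹) :=
            mul_le_mul_of_nonneg_left hinv (hBpos i)
          _ = lam⁻¹ * G cinf τ := by ring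
      calc (∫⁻ τ in s, F (ck k) τ)
          ≤ ∫⁻ τ in s, ENNReal.ofReal (lam⁻¹ * G cinf τ) := by
            refine lintegral_mono_ae ?_
            filter_upwards [ae_restrict_mem hs] with τ hτ using hpw τ hτ
        _ = ∫⁻ τ in s, ENNReal.ofReal lam⁻¹ * F cinf τ := by
            refine lintegral_congr fun τ => ?_
            rw [hF, ← ENNReal.ofReal_mul (inv_nonneg.2 hlam0.le)]
        _ = ENNReal.ofReal lam⁻¹ * ∫⁻ τ in s, F cinf τ :=
            lintegral_const_mul'' _ (hmeas cinf)
    have h1 : (atTop.limsup fun k => ∫⁻ τ in s, F (ck k) τ) ≤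
        ENNReal.ofReal lam⁻¹ * ∫⁻ τ in s, F cinf τ := limsup_le_of_le (by isBoundedDefault) hbound
    calc a * atTop.limsup (fun k => ∫⁻ τ in s, F (ck k) τ)
        ≤ a * (ENNReal.ofReal lam⁻¹ * ∫⁻ τ in s, F cinf τ) :=
          mul_le_mul_right h1 a
      _ = (ENNReal.ofReal lam * ENNReal.ofReal lam⁻¹) * ∫⁻ τ in s, F cinf τ := by
          rw [ha_eq, mul_assoc]
      _ = ∫⁻ τ in s, F cinf τ := by
          rw [← ENNReal.ofReal_mul hlam0.le, mul_inv_cancel₀ hlam0.ne', ENNReal.ofReal_one,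
            one_mul]
  exact tendsto_of_le_liminf_of_limsup_le hliminf hlimsup
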